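/- Let Q be a quasivariety with free algebra F of denumerable rank, and let C be a subalgebra of F. Then the class K = {A ∈ Q : A × C ∈ Q(F)} is a quasivariety: it is closed under subalgebras, direct products, and ultraproducts, and contains F. Here Q(F) denotes the quasivariety generated by F. -/

import Mathlib

/-- An algebraic signature: a type of operation symbols with arities. -/
structure Signature where
  ops : Type
  arity : ops → ℕ

/-- An algebra for a signature. -/
structure SigAlg (σ : Signature) where
  carrier : Type
  interp : (o : σ.ops) → (Fin (σ.arity o) → carrier) → carrier

/-- Homomorphisms of algebras. -/
def IsHom {σ : Signature} (A B : SigAlg σ) (f : A.carrier → B.carrier) : Prop :=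
  ∀ (o : σ.ops) (xs : Fin (σ.arity o) → A.carrier),
    f (A.interp o xs) = B.interp o (fun k => f (xs k))

/-- Terms in `n` variables. -/
inductive SigTerm (σ : Signature) (n : ℕ) where
  | var : Fin n → SigTerm σ n
  | app : (o : σ.ops) → (Fin (σ.arity o) → SigTerm σ n) → SigTerm σ n

/-- Evaluation of a term in an algebra under an assignment of the variables. -/
def evalT {σ : Signature} (A : SigAlg σ) {n : ℕ} (env : Fin n → A.carrier) :
    SigTerm σ n → A.carrier
  | .var i => env i
  | .app o ts => A.interp o (fun k => evalT A env (ts k))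

/-- A quasi-identity `(∀ x̄)[s₁ = t₁ ∧ ⋯ ∧ sₘ = tₘ → s = t]`: a finite list of premise
equations and a conclusion equation, in `nvars` variables.  When `prem = []` it is an
identity. -/
structure QuasiId (σ : Signature) where
  nvars : ℕ
  prem : List (SigTerm σ nvars × SigTerm σ nvars)
  concl : SigTerm σ nvars × SigTerm σ nvars

/-- Satisfaction of a quasi-identity in an algebra. -/
def SatQ {σ : Signature} (A : SigAlg σ) (q : QuasiId σ) : Prop :=
  ∀ env : Fin q.nvars → A.carrier,
    (∀ p ∈ q.prem, evalT A env p.1 = evalT A env p.2) →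
    evalT A env q.concl.1 = evalT A env q.concl.2

/-- The class of models of a set of quasi-identities. -/
def ModQ (σ : Signature) (E : Set (QuasiId σ)) : Set (SigAlg σ) :=
  {A | ∀ q ∈ E, SatQ A q}

/-- A quasivariety: a class of algebras axiomatized by quasi-identities. -/
def IsQuasivariety (σ : Signature) (Q : Set (SigAlg σ)) : Prop :=
  ∃ E : Set (QuasiId σ), Q = ModQ σ E

/-- The quasivariety generated by `F`: the class of all models of the quasi-equational
theory of `F`. -/
def QGen (σ : Signature) (F : SigAlg σ) : Set (SigAlg σ) :=
  ModQ σ {q | SatQ F q}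

/-- `F` is free for `Q` over the countably infinite set of free generators
`x 0, x 1, …`. -/
def IsFreeAlg (σ : Signature) (Q : Set (SigAlg σ)) (F : SigAlg σ) (x : ℕ → F.carrier) :
    Prop :=
  F ∈ Q ∧ ∀ A ∈ Q, ∀ g : ℕ → A.carrier,
    ∃! h : F.carrier → A.carrier, IsHom F A h ∧ ∀ n, h (x n) = g n

/-- A quasi-identity `q` true in the free algebra `F` is `Q`-active if its premise is
satisfiable in `F` (otherwise it is `Q`-passive). -/
def IsActive {σ : Signature} (F : SigAlg σ) (q : QuasiId σ) : Prop :=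
  SatQ F q ∧ ∃ env : Fin q.nvars → F.carrier,
    ∀ p ∈ q.prem, evalT F env p.1 = evalT F env p.2

/-- `Q` (with free algebra `F`) is almost structurally complete: every active
quasi-identity holds in all of `Q`. -/
def ASC (σ : Signature) (Q : Set (SigAlg σ)) (F : SigAlg σ) : Prop :=
  ∀ q : QuasiId σ, IsActive F q → ∀ A ∈ Q, SatQ A q

/-- Binary direct product of algebras. -/
def prodAlg {σ : Signature} (A B : SigAlg σ) : SigAlg σ where
  carrier := A.carrier × B.carrier
  interp o xs := (A.interp o (fun k => (xs k).1), B.interp o (fun k => (xs k).2))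

/-- Direct product of a family of algebras. -/
def piAlg {σ : Signature} {I : Type} (A : I → SigAlg σ) : SigAlg σ where
  carrier := ∀ i, (A i).carrier
  interp o xs := fun i => (A i).interp o (fun k => xs k i)

/-- A subuniverse: a subset closed under all the operations. -/
def IsSubuniverse {σ : Signature} (A : SigAlg σ) (C : Set A.carrier) : Prop :=
  ∀ (o : σ.ops) (xs : Fin (σ.arity o) → A.carrier), (∀ k, xs k ∈ C) → A.interp o xs ∈ C

/-- The subalgebra on a subuniverse. -/
def subAlg {σ : Signature} (A : SigAlg σ) (C : Set A.carrier)
    (hC : IsSubuniverse A C) : SigAlg σ where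
  carrier := C
  interp o xs := ⟨A.interp o (fun k => (xs k : A.carrier)), hC o _ (fun k => (xs k).2)⟩

/-- The setoid of `U`-almost-everywhere equality on a product. -/
def upSetoid {σ : Signature} {I : Type} (U : Ultrafilter I) (A : I → SigAlg σ) :
    Setoid (∀ i, (A i).carrier) where
  r x y := {i | x i = y i} ∈ U
  iseqv := by
    refine ⟨fun x => ?_, fun {x y} h => ?_, fun {x y z} h1 h2 => ?_⟩
    · have e : {i | x i = x i} = (Set.univ : Set I) := by ext i; simp
      rw [e]; exact Filter.univ_mem
    · have e : {i | x i = y i} = {i | y i = x i} := by ext i; exact eq_comm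
      rwa [e] at h
    · refine Filter.mem_of_superset (Filter.inter_mem h1 h2) ?_
      intro i hi
      exact hi.1.trans hi.2

/-- The ultraproduct of a family of algebras modulo an ultrafilter. -/
noncomputable def ultraProd {σ : Signature} {I : Type} (U : Ultrafilter I)
    (A : I → SigAlg σ) : SigAlg σ where
  carrier := Quotient (upSetoid U A)
  interp o xs :=
    Quotient.mk (upSetoid U A) (fun i => (A i).interp o (fun k => (xs k).out i))


section Aux

lemma evalT_hom' {σ : Signature} {A B : SigAlg σ} {f : A.carrier → B.carrier}
    (hf : IsHom A B f) {n : ℕ} (env : Fin n → A.carrier) :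
    ∀ t : SigTerm σ n, f (evalT A env t) = evalT B (fun j => f (env j)) t
  | .var _ => rfl
  | .app o ts => by
    simp only [evalT, hf o]
    exact congrArg (B.interp o) (funext fun k => evalT_hom' hf env (ts k))

lemma SatQ_embed' {σ : Signature} {A B : SigAlg σ} {f : A.carrier → B.carrier}
    (hf : IsHom A B f) (hinj : Function.Injective f) {q : QuasiId σ} (hB : SatQ B q) :
    SatQ A q := by
  intro env hp
  apply hinj
  rw [evalT_hom' hf, evalT_hom' hf]
  exact hB _ fun p hpm => by
    rw [← evalT_hom' hf, ← evalT_hom' hf, hp p hpm]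

lemma evalT_prod' {σ : Signature} {A B : SigAlg σ} {n : ℕ}
    (env : Fin n → (prodAlg A B).carrier) :
    ∀ t : SigTerm σ n, evalT (prodAlg A B) env t =
      (evalT A (fun j => (env j).1) t, evalT B (fun j => (env j).2) t)
  | .var _ => rfl
  | .app o ts => by
    show ((prodAlg A B).interp o fun k => evalT (prodAlg A B) env (ts k)) = _
    refine Prod.ext ?_ ?_
    · exact congrArg (A.interp o) (funext fun k => congrArg Prod.fst (evalT_prod' env (ts k)))
    · exact congrArg (B.interp o) (funext fun k => congrArg Prod.snd (evalT_prod' env (ts k)))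

lemma SatQ_prod' {σ : Signature} {A B : SigAlg σ} {q : QuasiId σ}
    (hA : SatQ A q) (hB : SatQ B q) : SatQ (prodAlg A B) q := by
  intro env hp
  rw [evalT_prod', evalT_prod']
  refine Prod.ext ?_ ?_
  · exact hA _ fun p hpm => by
      have h := hp p hpm; rw [evalT_prod', evalT_prod'] at h
      exact congrArg Prod.fst h
  · exact hB _ fun p hpm => by
      have h := hp p hpm; rw [evalT_prod', evalT_prod'] at h
      exact congrArg Prod.snd h

lemma evalT_pi' {σ : Signature} {I : Type} (A : I → SigAlg σ) {n : ℕ}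
    (env : Fin n → (piAlg A).carrier) (i : I) :
    ∀ t : SigTerm σ n, evalT (piAlg A) env t i = evalT (A i) (fun j => env j i) t
  | .var _ => rfl
  | .app o ts => congrArg ((A i).interp o) (funext fun k => evalT_pi' A env i (ts k))

lemma SatQ_pi' {σ : Signature} {I : Type} {A : I → SigAlg σ} {q : QuasiId σ}
    (h : ∀ i, SatQ (A i) q) : SatQ (piAlg A) q := by
  intro env hp
  funext i
  rw [evalT_pi', evalT_pi']
  exact h i _ fun p hpm => by
    have hx := congrFun (hp p hpm) i
    rwa [evalT_pi', evalT_pi'] at hx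

lemma list_inter_mem' {I : Type} (U : Ultrafilter I) {α : Type} :
    ∀ (l : List α) (S : α → Set I), (∀ a ∈ l, S a ∈ U) → {i | ∀ a ∈ l, i ∈ S a} ∈ U
  | [], _, _ => by
      simp only [List.not_mem_nil, false_implies, implies_true, Set.setOf_true]
      exact Filter.univ_mem
  | a :: l, S, h => by
    refine Filter.mem_of_superset (Filter.inter_mem (h a List.mem_cons_self)
      (list_inter_mem' U l S fun b hb => h b (List.mem_cons_of_mem a hb))) ?_
    rintro i ⟨h1, h2⟩ b hb
    rcases List.mem_cons.mp hb with rfl | hb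
    · exact h1
    · exact h2 b hb

lemma evalT_ultra' {σ : Signature} {I : Type} (U : Ultrafilter I) (A : I → SigAlg σ)
    {n : ℕ} (env : Fin n → (ultraProd U A).carrier) :
    ∀ t : SigTerm σ n, evalT (ultraProd U A) env t =
      Quotient.mk (upSetoid U A) (fun i => evalT (A i) (fun j => (env j).out i) t)
  | .var j => (env j).out_eq.symm
  | .app o ts => by
    show Quotient.mk (upSetoid U A)
        (fun i => (A i).interp o fun k => (evalT (ultraProd U A) env (ts k)).out i) = _
    apply Quotient.sound
    have hk : ∀ k : Fin (σ.arity o),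
        {i | (evalT (ultraProd U A) env (ts k)).out i
           = evalT (A i) (fun j => (env j).out i) (ts k)} ∈ U := by
      intro k
      have h1 := evalT_ultra' U A env (ts k)
      rw [h1]
      have h2 := Quotient.exact (Quotient.out_eq (Quotient.mk (upSetoid U A)
        fun i => evalT (A i) (fun j => (env j).out i) (ts k)))
      exact h2
    show {i | _ = _} ∈ U
    refine Filter.mem_of_superset ((Filter.iInter_mem).2 hk) ?_
    intro i hi
    show (A i).interp o _ = (A i).interp o _
    exact congrArg _ (funext fun k => Set.mem_iInter.mp hi k)

lemma SatQ_ultra' {σ : Signature} {I : Type} {U : Ultrafilter I} {A : I → SigAlg σ}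
    {q : QuasiId σ} (h : ∀ i, SatQ (A i) q) : SatQ (ultraProd U A) q := by
  intro env hp
  rw [evalT_ultra', evalT_ultra']
  apply Quotient.sound
  have hT : ∀ p ∈ q.prem, {i | evalT (A i) (fun j => (env j).out i) p.1
      = evalT (A i) (fun j => (env j).out i) p.2} ∈ U := by
    intro p hpm
    have hx := hp p hpm
    rw [evalT_ultra', evalT_ultra'] at hx
    exact Quotient.exact hx
  show {i | _ = _} ∈ U
  refine Filter.mem_of_superset (list_inter_mem' U q.prem _ hT) ?_
  intro i hi
  exact h i _ (fun p hpm => hi p hpm)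

lemma SatQ_ultra_prod' {σ : Signature} {I : Type} {U : Ultrafilter I} {As : I → SigAlg σ}
    {Cg : SigAlg σ} {q : QuasiId σ} (hCq : SatQ Cg q)
    (h : ∀ i, SatQ (prodAlg (As i) Cg) q) :
    SatQ (prodAlg (ultraProd U As) Cg) q := by
  intro env hp
  rw [evalT_prod', evalT_prod']
  refine Prod.ext ?_ ?_
  · rw [evalT_ultra', evalT_ultra']
    apply Quotient.sound
    have hT : ∀ p ∈ q.prem, {i | evalT (As i) (fun j => (env j).1.out i) p.1
        = evalT (As i) (fun j => (env j).1.out i) p.2} ∈ U := by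
      intro p hpm
      have hx := hp p hpm
      rw [evalT_prod', evalT_prod'] at hx
      have h1 := congrArg Prod.fst hx
      simp only at h1
      rw [evalT_ultra', evalT_ultra'] at h1
      exact Quotient.exact h1
    show {i | _ = _} ∈ U
    refine Filter.mem_of_superset (list_inter_mem' U q.prem _ hT) ?_
    intro i hi
    have key : evalT (prodAlg (As i) Cg) (fun j => ((env j).1.out i, (env j).2)) q.concl.1
        = evalT (prodAlg (As i) Cg) (fun j => ((env j).1.out i, (env j).2)) q.concl.2 := by
      apply h i
      intro p hpm
      refine (evalT_prod' _ p.1).trans (Eq.trans ?_ (evalT_prod' _ p.2).symm)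
      refine Prod.ext ?_ ?_
      · exact hi p hpm
      · have hx := hp p hpm
        rw [evalT_prod', evalT_prod'] at hx
        have h2 := congrArg Prod.snd hx
        exact h2
    replace key := (evalT_prod' _ q.concl.1).symm.trans (key.trans (evalT_prod' _ q.concl.2))
    exact congrArg Prod.fst key
  · exact hCq _ fun p hpm => by
      have hx := hp p hpm
      rw [evalT_prod', evalT_prod'] at hx
      exact congrArg Prod.snd hx

lemma prod_hom' {σ : Signature} {A A' B B' : SigAlg σ} {f : A.carrier → A'.carrier}
    {g : B.carrier → B'.carrier} (hf : IsHom A A' f) (hg : IsHom B B' g) :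
    IsHom (prodAlg A B) (prodAlg A' B') (fun p => (f p.1, g p.2)) := by
  intro o xs
  show (f (A.interp o _), g (B.interp o _)) = _
  rw [hf, hg]
  rfl

lemma prod_inj' {α β α' β' : Type} {f : α → α'} {g : β → β'} (hf : Function.Injective f)
    (hg : Function.Injective g) : Function.Injective (fun p : α × β => (f p.1, g p.2)) := by
  rintro ⟨a, b⟩ ⟨a', b'⟩ h
  simp only [Prod.mk.injEq] at h
  obtain ⟨h1, h2⟩ := h
  cases hf h1; cases hg h2; rfl

lemma subAlg_hom' {σ : Signature} (F : SigAlg σ) (C : Set F.carrier)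
    (hC : IsSubuniverse F C) : IsHom (subAlg F C hC) F Subtype.val := fun _ _ => rfl

end Aux

/-- let `Q` be a quasivariety with free algebra `F` of denumerable rank
and let `C` be a subalgebra of `F`.  Then `K = {A ∈ Q : A × C ∈ Q(F)}` is a
quasivariety: it is closed under subalgebras, direct products and ultraproducts, and it
contains `F`. -/
theorem stmt11 (σ : Signature) (Q : Set (SigAlg σ)) (hQ : IsQuasivariety σ Q)
    (F : SigAlg σ) (x : ℕ → F.carrier) (hF : IsFreeAlg σ Q F x)
    (C : Set F.carrier) (hC : IsSubuniverse F C) :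
    let K : Set (SigAlg σ) := {A | A ∈ Q ∧ prodAlg A (subAlg F C hC) ∈ QGen σ F}
    (∀ (A B : SigAlg σ), B ∈ K → ∀ f : A.carrier → B.carrier,
        IsHom A B f → Function.Injective f → A ∈ K) ∧
    (∀ (I : Type) (As : I → SigAlg σ), (∀ i, As i ∈ K) → piAlg As ∈ K) ∧
    (∀ (I : Type) (U : Ultrafilter I) (As : I → SigAlg σ),
        (∀ i, As i ∈ K) → ultraProd U As ∈ K) ∧
    F ∈ K := by
  obtain ⟨E, hE⟩ := hQ
  intro K
  have memQ : ∀ A : SigAlg σ, A ∈ Q ↔ ∀ q ∈ E, SatQ A q := by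
    intro A; rw [hE]; exact Iff.rfl
  have hCF : ∀ q : QuasiId σ, SatQ F q → SatQ (subAlg F C hC) q :=
    fun q hq => SatQ_embed' (subAlg_hom' F C hC) Subtype.val_injective hq
  have hFK : F ∈ K := by
    refine ⟨hF.1, ?_⟩
    intro q hq
    exact SatQ_embed' (prod_hom' (fun _ _ => rfl : IsHom F F id) (subAlg_hom' F C hC))
      (prod_inj' (fun _ _ h => h) Subtype.val_injective) (SatQ_prod' hq hq)
  refine ⟨?_, ?_, ?_, hFK⟩
  · intro A B hB f hf hinj
    refine ⟨(memQ A).2 fun q hq => SatQ_embed' hf hinj (((memQ B).1 hB.1) q hq), ?_⟩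
    intro q hq
    exact SatQ_embed' (prod_hom' hf (fun _ _ => rfl : IsHom (subAlg F C hC) (subAlg F C hC) id))
      (prod_inj' hinj fun _ _ h => h) (hB.2 q hq)
  · intro I As hAs
    refine ⟨(memQ _).2 fun q hq => SatQ_pi' fun i => (memQ (As i)).1 (hAs i).1 q hq, ?_⟩
    intro q hq
    have htarget : SatQ (prodAlg (piAlg fun i => prodAlg (As i) (subAlg F C hC))
        (subAlg F C hC)) q :=
      SatQ_prod' (SatQ_pi' fun i => (hAs i).2 q hq) (hCF q hq)
    refine SatQ_embed' (A := prodAlg (piAlg As) (subAlg F C hC))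
      (f := fun p => (fun i => (p.1 i, p.2), p.2)) ?_ ?_ htarget
    · intro o xs; rfl
    · intro p p' h
      have h0 := congrArg Prod.fst h
      have h2 := congrArg Prod.snd h
      have h1 : p.1 = p'.1 := by
        funext i
        have hx := congrFun h0 i
        have hy := congrArg Prod.fst hx
        exact hy
      exact Prod.ext h1 h2
  · intro I U As hAs
    refine ⟨(memQ _).2 fun q hq => SatQ_ultra' fun i => (memQ (As i)).1 (hAs i).1 q hq, ?_⟩
    intro q hq
    exact SatQ_ultra_prod' (hCF q hq) (fun i => (hAs i).2 q hq)
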